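/- Sparse stopping gives Carleson: Let C(Q',Q) be a stopping criterion on pairs of dyadic cubes Q' ⊊ Q which is sparse, i.e. for every Q the maximal Q' ⊊ Q with C(Q',Q) true satisfy Σ|Q'| ≤ τ|Q| for a fixed τ < 1. If the initial collection I ⊂ D is Carleson, i.e. sup_{Q ∈ I} |Q|^{−1} Σ_{I ∋ R ⊂ Q} |R| < ∞, then the stopping family F(I, C) generated by iterating the stopping construction is also Carleson: sup_{Q ∈ F} |Q|^{−1} Σ_{F ∋ R ⊂ Q} |R| < ∞. -/

import Mathlib

open MeasureTheory Set ENNReal Function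

noncomputable section

/-- The dyadic cube of generation `k` (side length `2^{-k}`) at position `m` in `ℝⁿ`. -/
def dyadic (n : ℕ) (k : ℤ) (m : Fin n → ℤ) : Set (Fin n → ℝ) :=
  {x | ∀ i, (m i : ℝ) * 2 ^ (-k) ≤ x i ∧ x i < ((m i : ℝ) + 1) * 2 ^ (-k)}

lemma two_zpow_pos (k : ℤ) : (0:ℝ) < 2 ^ k := by positivity

lemma mem_dyadic_iff {n : ℕ} {k : ℤ} {m : Fin n → ℤ} {x : Fin n → ℝ} :
    x ∈ dyadic n k m ↔ ∀ i, ⌊x i * 2 ^ k⌋ = m i := by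
  unfold dyadic
  simp only [mem_setOf_eq]
  refine forall_congr' fun i => ?_
  have hc : (0:ℝ) < 2 ^ k := two_zpow_pos k
  rw [Int.floor_eq_iff, zpow_neg, ← div_eq_mul_inv, ← div_eq_mul_inv,
    div_le_iff₀ hc, lt_div_iff₀ hc]

lemma corner_mem_dyadic {n : ℕ} {k : ℤ} {m : Fin n → ℤ} :
    (fun i => (m i : ℝ) * 2 ^ (-k)) ∈ dyadic n k m := by
  intro i
  have hc : (0:ℝ) < 2 ^ (-k) := two_zpow_pos (-k)
  exact ⟨le_refl _, mul_lt_mul_of_pos_right (lt_add_one _) hc⟩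

lemma dyadic_nonempty {n : ℕ} {k : ℤ} {m : Fin n → ℤ} : (dyadic n k m).Nonempty :=
  ⟨_, corner_mem_dyadic⟩

lemma dyadic_eq_pi {n : ℕ} {k : ℤ} {m : Fin n → ℤ} :
    dyadic n k m = Set.pi univ fun i => Ico ((m i : ℝ) * 2 ^ (-k)) (((m i : ℝ) + 1) * 2 ^ (-k)) := by
  ext x; simp [dyadic, Set.mem_pi, mem_Ico]

lemma dyadic_measurable {n : ℕ} {k : ℤ} {m : Fin n → ℤ} : MeasurableSet (dyadic n k m) := by
  rw [dyadic_eq_pi]; exact MeasurableSet.univ_pi fun i => measurableSet_Ico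

lemma volume_dyadic {n : ℕ} {k : ℤ} {m : Fin n → ℤ} :
    volume (dyadic n k m) = (ENNReal.ofReal ((2:ℝ) ^ (-k))) ^ n := by
  rw [dyadic_eq_pi, volume_pi_pi]
  have : ∀ i : Fin n, volume (Ico ((m i : ℝ) * 2 ^ (-k)) (((m i : ℝ) + 1) * 2 ^ (-k)))
      = ENNReal.ofReal ((2:ℝ) ^ (-k)) := by
    intro i; rw [Real.volume_Ico]; congr 1; ring
  simp only [this, Finset.prod_const, Finset.card_univ, Fintype.card_fin]

lemma volume_dyadic_pos {n : ℕ} {k : ℤ} {m : Fin n → ℤ} : 0 < volume (dyadic n k m) := by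
  rw [volume_dyadic]
  exact ENNReal.pow_pos (ENNReal.ofReal_pos.2 (two_zpow_pos _)) n

lemma volume_dyadic_ne_top {n : ℕ} {k : ℤ} {m : Fin n → ℤ} : volume (dyadic n k m) ≠ ⊤ := by
  rw [volume_dyadic]
  exact ENNReal.pow_ne_top ENNReal.ofReal_ne_top

lemma floor_div_two_pow (d : ℕ) (z : ℝ) : ⌊z / 2 ^ d⌋ = ⌊z⌋ / (2 ^ d : ℤ) := by
  have hD : (0:ℝ) < 2 ^ d := by positivity
  have hDZ : (0:ℤ) < 2 ^ d := by positivity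
  set q := ⌊z⌋ / (2 ^ d : ℤ) with hq
  have hmod : (2:ℤ) ^ d * q + ⌊z⌋ % (2 ^ d : ℤ) = ⌊z⌋ := Int.mul_ediv_add_emod _ _
  have hr0 : 0 ≤ ⌊z⌋ % (2 ^ d : ℤ) := Int.emod_nonneg _ (by positivity)
  have hr1 : ⌊z⌋ % (2 ^ d : ℤ) < 2 ^ d := Int.emod_lt_of_pos _ hDZ
  rw [Int.floor_eq_iff]
  constructor
  · rw [le_div_iff₀ hD]
    have h1 : ((2:ℤ) ^ d * q : ℤ) ≤ ⌊z⌋ := by linarith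
    have h2 : ((2:ℤ) ^ d * q : ℝ) ≤ (⌊z⌋ : ℝ) := by exact_mod_cast h1
    have h3 : (⌊z⌋ : ℝ) ≤ z := Int.floor_le z
    push_cast at h2 ⊢
    linarith
  · rw [div_lt_iff₀ hD]
    have h1 : ⌊z⌋ + 1 ≤ (q + 1) * 2 ^ d := by
      have hexp : (q + 1) * (2:ℤ) ^ d = 2 ^ d * q + 2 ^ d := by ring
      linarith
    have h2 : ((⌊z⌋ : ℝ) + 1) ≤ ((q + 1) * 2 ^ d : ℤ) := by exact_mod_cast h1
    have h3 : z < ⌊z⌋ + 1 := Int.lt_floor_add_one z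
    push_cast at h2 ⊢
    linarith

lemma floor_zpow_congr {k k' : ℤ} (hkk : k' ≤ k) {z w : ℝ}
    (h : ⌊z * 2 ^ k⌋ = ⌊w * 2 ^ k⌋) : ⌊z * 2 ^ k'⌋ = ⌊w * 2 ^ k'⌋ := by
  set d : ℕ := (k - k').toNat with hd
  have hkd : k' = k - d := by omega
  have key : ∀ u : ℝ, u * 2 ^ k' = (u * 2 ^ k) / 2 ^ d := by
    intro u
    rw [hkd, zpow_sub₀ (two_ne_zero), div_eq_mul_inv, zpow_natCast]
    ring
  rw [key z, key w, floor_div_two_pow, floor_div_two_pow, h]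

lemma dyadic_subset_of_mem {n : ℕ} {k k' : ℤ} (hkk : k' ≤ k) {m : Fin n → ℤ} {m' : Fin n → ℤ}
    {x : Fin n → ℝ} (hx : x ∈ dyadic n k m) (hx' : x ∈ dyadic n k' m') :
    dyadic n k m ⊆ dyadic n k' m' := by
  rw [mem_dyadic_iff] at hx hx'
  intro y hy
  rw [mem_dyadic_iff] at hy ⊢
  intro i
  have := floor_zpow_congr hkk (z := y i) (w := x i) (by rw [hy i, hx i])
  rw [this, hx' i]

lemma dyadic_nested_or_disjoint {n : ℕ} (P Q : ℤ × (Fin n → ℤ))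
    (h : (dyadic n P.1 P.2 ∩ dyadic n Q.1 Q.2).Nonempty) :
    dyadic n P.1 P.2 ⊆ dyadic n Q.1 Q.2 ∨ dyadic n Q.1 Q.2 ⊆ dyadic n P.1 P.2 := by
  obtain ⟨x, hxP, hxQ⟩ := h
  rcases le_total Q.1 P.1 with hk | hk
  · exact Or.inl (dyadic_subset_of_mem hk hxP hxQ)
  · exact Or.inr (dyadic_subset_of_mem hk hxQ hxP)

lemma gen_le_of_subset {n : ℕ} (hn : n ≠ 0) {P Q : ℤ × (Fin n → ℤ)}
    (h : dyadic n P.1 P.2 ⊆ dyadic n Q.1 Q.2) : Q.1 ≤ P.1 := by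
  have hvol := measure_mono (μ := volume) h
  rw [volume_dyadic, volume_dyadic] at hvol
  by_contra hlt
  push_neg at hlt
  have h2 : (2:ℝ) ^ (-Q.1) < 2 ^ (-P.1) := by
    apply zpow_lt_zpow_right₀ (by norm_num : (1:ℝ) < 2); omega
  have : ENNReal.ofReal ((2:ℝ) ^ (-Q.1)) < ENNReal.ofReal ((2:ℝ) ^ (-P.1)) :=
    (ENNReal.ofReal_lt_ofReal_iff (two_zpow_pos _)).2 h2
  exact absurd hvol (not_le.2 (ENNReal.pow_lt_pow_left hn this))

lemma dyadic_eq_of_gen_eq {n : ℕ} {P Q : ℤ × (Fin n → ℤ)} (hk : P.1 = Q.1)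
    (h : (dyadic n P.1 P.2 ∩ dyadic n Q.1 Q.2).Nonempty) : P = Q := by
  obtain ⟨x, hxP, hxQ⟩ := h
  rw [mem_dyadic_iff] at hxP hxQ
  obtain ⟨k, m⟩ := P; obtain ⟨k', m'⟩ := Q
  simp only at hk hxP hxQ
  subst hk
  have : m = m' := funext fun i => by rw [← hxP i, hxQ i]
  rw [this]

lemma dyadic_inj {n : ℕ} (hn : n ≠ 0) {P Q : ℤ × (Fin n → ℤ)}
    (h : dyadic n P.1 P.2 = dyadic n Q.1 Q.2) : P = Q := by
  have h1 : Q.1 ≤ P.1 := gen_le_of_subset hn h.le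
  have h2 : P.1 ≤ Q.1 := gen_le_of_subset hn h.ge
  refine dyadic_eq_of_gen_eq (le_antisymm h2 h1) ?_
  rw [h, inter_self]; exact dyadic_nonempty

lemma dyadic_ssubset_of_ne {n : ℕ} (hn : n ≠ 0) {P Q : ℤ × (Fin n → ℤ)}
    (h : dyadic n P.1 P.2 ⊆ dyadic n Q.1 Q.2) (hne : P ≠ Q) :
    dyadic n P.1 P.2 ⊂ dyadic n Q.1 Q.2 :=
  h.ssubset_of_ne fun he => hne (dyadic_inj hn he)

lemma between_finite {n : ℕ} (hn : n ≠ 0) (T Q : ℤ × (Fin n → ℤ)) :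
    {R : ℤ × (Fin n → ℤ) | dyadic n T.1 T.2 ⊆ dyadic n R.1 R.2 ∧
      dyadic n R.1 R.2 ⊆ dyadic n Q.1 Q.2}.Finite := by
  set Z := {R : ℤ × (Fin n → ℤ) | dyadic n T.1 T.2 ⊆ dyadic n R.1 R.2 ∧
      dyadic n R.1 R.2 ⊆ dyadic n Q.1 Q.2} with hZ
  have himg : (Prod.fst '' Z).Finite := by
    apply (Set.finite_Icc Q.1 T.1).subset
    rintro k ⟨R, hR, rfl⟩
    exact ⟨gen_le_of_subset hn hR.2, gen_le_of_subset hn hR.1⟩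
  apply Set.Finite.of_finite_image himg
  rintro R hR R' hR' hk
  apply dyadic_eq_of_gen_eq hk
  obtain ⟨x, hx⟩ := dyadic_nonempty (n := n) (k := T.1) (m := T.2)
  exact ⟨x, hR.1 hx, hR'.1 hx⟩

lemma exists_maximal {n : ℕ} (hn : n ≠ 0) (I : Set (ℤ × (Fin n → ℤ))) (Q : ℤ × (Fin n → ℤ))
    {T : ℤ × (Fin n → ℤ)} (hT : T ∈ I) (hTQ : dyadic n T.1 T.2 ⊆ dyadic n Q.1 Q.2) :
    ∃ M, M ∈ I ∧ dyadic n M.1 M.2 ⊆ dyadic n Q.1 Q.2 ∧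
      dyadic n T.1 T.2 ⊆ dyadic n M.1 M.2 ∧
      ∀ T' ∈ I, dyadic n M.1 M.2 ⊆ dyadic n T'.1 T'.2 →
        dyadic n T'.1 T'.2 ⊆ dyadic n Q.1 Q.2 → T' = M := by
  set Z := {R : ℤ × (Fin n → ℤ) | R ∈ I ∧ dyadic n T.1 T.2 ⊆ dyadic n R.1 R.2 ∧
      dyadic n R.1 R.2 ⊆ dyadic n Q.1 Q.2} with hZdef
  have hZfin : Z.Finite := (between_finite hn T Q).subset fun R hR => ⟨hR.2.1, hR.2.2⟩
  have hZne : Z.Nonempty := ⟨T, hT, subset_refl _, hTQ⟩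
  obtain ⟨M, hM, hmin⟩ := Set.Finite.exists_minimalFor Prod.fst Z hZfin hZne
  refine ⟨M, hM.1, hM.2.2, hM.2.1, ?_⟩
  intro T' hT' hMT' hT'Q
  have hT'Z : T' ∈ Z := ⟨hT', hM.2.1.trans hMT', hT'Q⟩
  have hk : T'.1 ≤ M.1 := gen_le_of_subset hn hMT'
  have := (le_antisymm hk (hmin hT'Z hk)).symm
  apply dyadic_eq_of_gen_eq (this.symm)
  obtain ⟨x, hx⟩ := dyadic_nonempty (n := n) (k := M.1) (m := M.2)
  exact ⟨x, hMT' hx, hx⟩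

/-- The maximal cubes `Q' ⊊ Q` for which the stopping criterion `crit Q' Q` holds. -/
def maxStop (n : ℕ) (crit : ℤ × (Fin n → ℤ) → ℤ × (Fin n → ℤ) → Prop)
    (Q : ℤ × (Fin n → ℤ)) : Set (ℤ × (Fin n → ℤ)) :=
  {Q' | dyadic n Q'.1 Q'.2 ⊂ dyadic n Q.1 Q.2 ∧ crit Q' Q ∧
    ∀ R : ℤ × (Fin n → ℤ), dyadic n Q'.1 Q'.2 ⊂ dyadic n R.1 R.2 →
      dyadic n R.1 R.2 ⊂ dyadic n Q.1 Q.2 → ¬ crit R Q}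

/-- The increasing stages of the stopping construction: start from the initial collection `I`;
at each stage add, for the members `F` already constructed, the maximal cubes `F' ⊊ F`
satisfying the criterion `crit F' F` and not contained in any already-constructed `F'' ⊊ F`. -/
def stopAcc (n : ℕ) (crit : ℤ × (Fin n → ℤ) → ℤ × (Fin n → ℤ) → Prop)
    (I : Set (ℤ × (Fin n → ℤ))) : ℕ → Set (ℤ × (Fin n → ℤ))
  | 0 => I
  | k + 1 => stopAcc n crit I k ∪
      {F' | ∃ F ∈ stopAcc n crit I k, F' ∈ maxStop n crit F ∧
        ∀ F'' ∈ stopAcc n crit I k, dyadic n F''.1 F''.2 ⊂ dyadic n F.1 F.2 →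
          ¬ dyadic n F'.1 F'.2 ⊆ dyadic n F''.1 F''.2}

/-- The stopping family `F(I, crit)` generated by iterating the stopping construction. -/
def stopFam (n : ℕ) (crit : ℤ × (Fin n → ℤ) → ℤ × (Fin n → ℤ) → Prop)
    (I : Set (ℤ × (Fin n → ℤ))) : Set (ℤ × (Fin n → ℤ)) :=
  ⋃ k, stopAcc n crit I k


variable {n : ℕ} {crit : ℤ × (Fin n → ℤ) → ℤ × (Fin n → ℤ) → Prop}
  {I : Set (ℤ × (Fin n → ℤ))}

/-- The cubes newly added at stage `j`. -/
def newAt (n : ℕ) (crit : ℤ × (Fin n → ℤ) → ℤ × (Fin n → ℤ) → Prop)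
    (I : Set (ℤ × (Fin n → ℤ))) : ℕ → Set (ℤ × (Fin n → ℤ))
  | 0 => I
  | j + 1 => stopAcc n crit I (j + 1) \ stopAcc n crit I j

lemma stopAcc_le_succ (k : ℕ) : stopAcc n crit I k ⊆ stopAcc n crit I (k + 1) :=
  subset_union_left

lemma stopAcc_mono {j k : ℕ} (h : j ≤ k) : stopAcc n crit I j ⊆ stopAcc n crit I k := by
  induction k with
  | zero => simp_all
  | succ k ih =>
    rcases Nat.lt_or_ge j (k+1) with h' | h'
    · exact (ih (by omega)).trans (stopAcc_le_succ k)
    · have : j = k + 1 := by omega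
      subst this; rfl

lemma newAt_subset (j : ℕ) : newAt n crit I j ⊆ stopAcc n crit I j := by
  cases j with
  | zero => exact subset_refl _
  | succ j => exact fun S hS => hS.1

lemma newAt_subset_fam (j : ℕ) : newAt n crit I j ⊆ stopFam n crit I :=
  (newAt_subset j).trans (subset_iUnion (stopAcc n crit I) j)

lemma maxStop_nonnested (hn : n ≠ 0) {Q S1 S2 : ℤ × (Fin n → ℤ)}
    (h1 : S1 ∈ maxStop n crit Q) (h2 : S2 ∈ maxStop n crit Q)
    (hsub : dyadic n S1.1 S1.2 ⊆ dyadic n S2.1 S2.2) : S1 = S2 := by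
  by_contra hne
  exact h1.2.2 S2 (dyadic_ssubset_of_ne hn hsub hne) h2.1 h2.2.1

lemma witness_of_new {j : ℕ} {S : ℤ × (Fin n → ℤ)} (hS : S ∈ newAt n crit I (j + 1)) :
    ∃ F ∈ newAt n crit I j, S ∈ maxStop n crit F ∧
      ∀ F'' ∈ stopAcc n crit I j, dyadic n F''.1 F''.2 ⊂ dyadic n F.1 F.2 →
        ¬ dyadic n S.1 S.2 ⊆ dyadic n F''.1 F''.2 := by
  obtain ⟨hS1, hS2⟩ := hS
  rcases hS1 with h | h
  · exact absurd h hS2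
  obtain ⟨F, hF, hmax, hexcl⟩ := h
  cases j with
  | zero => exact ⟨F, hF, hmax, hexcl⟩
  | succ j' =>
    refine ⟨F, ⟨hF, fun hF' => ?_⟩, hmax, hexcl⟩
    exact hS2 (Or.inr ⟨F, hF', hmax,
      fun F'' hF'' h1 h2 => hexcl F'' (stopAcc_le_succ j' hF'') h1 h2⟩)

lemma no_outer_witness (hn : n ≠ 0) :
    ∀ k : ℕ, ∀ Q ∈ stopAcc n crit I k, ∀ (j : ℕ) (F S : ℤ × (Fin n → ℤ)),
      F ∈ stopAcc n crit I j → S ∈ maxStop n crit F →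
      (∀ F'' ∈ stopAcc n crit I j, dyadic n F''.1 F''.2 ⊂ dyadic n F.1 F.2 →
        ¬ dyadic n S.1 S.2 ⊆ dyadic n F''.1 F''.2) →
      dyadic n S.1 S.2 ⊂ dyadic n Q.1 Q.2 → dyadic n Q.1 Q.2 ⊂ dyadic n F.1 F.2 → False := by
  intro k
  induction k using Nat.strong_induction_on with
  | _ k ih =>
    intro Q hQk j F S hF hSmax hSexcl hSQ hQF
    by_cases hQj : Q ∈ stopAcc n crit I j
    · exact hSexcl Q hQj hQF hSQ.subset
    have hjk : j < k := by
      by_contra hjk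
      exact hQj (stopAcc_mono (by omega) hQk)
    cases k with
    | zero => omega
    | succ k0 =>
      rcases hQk with hQk0 | hQnew
      · exact ih k0 (by omega) Q hQk0 j F S hF hSmax hSexcl hSQ hQF
      obtain ⟨P, hPk0, hQmax, hQexcl⟩ := hQnew
      have hQP : dyadic n Q.1 Q.2 ⊂ dyadic n P.1 P.2 := hQmax.1
      obtain ⟨x, hx⟩ := dyadic_nonempty (n := n) (k := Q.1) (m := Q.2)
      have hnest := dyadic_nested_or_disjoint P F ⟨x, hQP.subset hx, hQF.subset hx⟩
      rcases hnest with hPF | hFP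
      · -- P ⊆ F
        by_cases hFP' : dyadic n F.1 F.2 ⊆ dyadic n P.1 P.2
        · -- equal, so F = P, and S, Q ∈ maxStop F, S ⊊ Q : contradiction
          have hFPeq : F = P := dyadic_inj hn (Subset.antisymm hFP' hPF)
          subst hFPeq
          have := maxStop_nonnested hn hSmax hQmax hSQ.subset
          subst this
          exact hSQ.ne rfl
        · -- P ⊊ F : use IH on P
          have hPFs : dyadic n P.1 P.2 ⊂ dyadic n F.1 F.2 := ⟨hPF, hFP'⟩
          exact ih k0 (by omega) P hPk0 j F S hF hSmax hSexcl
            (hSQ.trans hQP) hPFs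
      · -- F ⊆ P : then Q ⊊ F ⊊ P? Use Q's exclusion with F'' := F
        have hFk0 : F ∈ stopAcc n crit I k0 := stopAcc_mono (by omega) hF
        have hFPs : dyadic n F.1 F.2 ⊂ dyadic n P.1 P.2 := by
          refine ⟨hFP, fun h => ?_⟩
          have : F = P := dyadic_inj hn (Subset.antisymm hFP h)
          subst this
          have := maxStop_nonnested hn hSmax hQmax hSQ.subset
          subst this
          exact hSQ.ne rfl
        exact hQexcl F hFk0 hFPs hQF.subset

lemma parent_in_cube (hn : n ≠ 0) {j : ℕ} {S Q : ℤ × (Fin n → ℤ)}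
    (hS : S ∈ newAt n crit I (j + 1)) {kQ : ℕ} (hQ : Q ∈ stopAcc n crit I kQ)
    (hSQ : dyadic n S.1 S.2 ⊂ dyadic n Q.1 Q.2) :
    ∃ F ∈ newAt n crit I j, S ∈ maxStop n crit F ∧
      dyadic n F.1 F.2 ⊆ dyadic n Q.1 Q.2 := by
  obtain ⟨F, hFnew, hSmax, hSexcl⟩ := witness_of_new hS
  obtain ⟨x, hx⟩ := dyadic_nonempty (n := n) (k := S.1) (m := S.2)
  have hnest := dyadic_nested_or_disjoint F Q ⟨x, hSmax.1.subset hx, hSQ.subset hx⟩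
  rcases hnest with hFQ | hQF
  · exact ⟨F, hFnew, hSmax, hFQ⟩
  · by_cases hFQ' : dyadic n F.1 F.2 ⊆ dyadic n Q.1 Q.2
    · exact ⟨F, hFnew, hSmax, hFQ'⟩
    · exfalso
      exact no_outer_witness hn kQ Q hQ j F S (newAt_subset j hFnew) hSmax hSexcl
        hSQ ⟨hQF, hFQ'⟩

lemma newAt_stage_unique {j j' : ℕ} {S : ℤ × (Fin n → ℤ)}
    (h : S ∈ newAt n crit I j) (h' : S ∈ newAt n crit I j') : j = j' := by
  by_contra hne
  wlog hlt : j < j' generalizing j j'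
  · exact this h' h (Ne.symm hne) (by omega)
  cases j' with
  | zero => omega
  | succ j'' => exact h'.2 (stopAcc_mono (by omega) (newAt_subset j h))

lemma mem_stopFam_iff_newAt {S : ℤ × (Fin n → ℤ)} :
    S ∈ stopFam n crit I ↔ ∃ j, S ∈ newAt n crit I j := by
  constructor
  · rintro hS
    rw [stopFam, mem_iUnion] at hS
    obtain ⟨k, hk⟩ := hS
    induction k with
    | zero => exact ⟨0, hk⟩
    | succ k ihk =>
      by_cases h : S ∈ stopAcc n crit I k
      · exact ihk h
      · exact ⟨k + 1, hk, h⟩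
  · rintro ⟨j, hj⟩
    exact newAt_subset_fam j hj

/-- `vol` of a labelled cube. -/
def dvol {n : ℕ} (P : ℤ × (Fin n → ℤ)) : ℝ≥0∞ := volume (dyadic n P.1 P.2)

lemma Isum_le (hn : n ≠ 0) {CI : ℝ≥0∞}
    (hI : ∀ Q ∈ I,
      ∑' R : {R : ℤ × (Fin n → ℤ) // R ∈ I ∧ dyadic n R.1 R.2 ⊆ dyadic n Q.1 Q.2},
        volume (dyadic n R.val.1 R.val.2) ≤ CI * volume (dyadic n Q.1 Q.2))
    (Q : ℤ × (Fin n → ℤ)) :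
    ∑' R : {R : ℤ × (Fin n → ℤ) // R ∈ I ∧ dyadic n R.1 R.2 ⊆ dyadic n Q.1 Q.2},
      volume (dyadic n R.val.1 R.val.2) ≤ CI * volume (dyadic n Q.1 Q.2) := by
  classical
  set Mx : Set (ℤ × (Fin n → ℤ)) := {M | M ∈ I ∧ dyadic n M.1 M.2 ⊆ dyadic n Q.1 Q.2 ∧
    ∀ T' ∈ I, dyadic n M.1 M.2 ⊆ dyadic n T'.1 T'.2 →
      dyadic n T'.1 T'.2 ⊆ dyadic n Q.1 Q.2 → T' = M} with hMxdef
  have hch : ∀ a : {R : ℤ × (Fin n → ℤ) // R ∈ I ∧ dyadic n R.1 R.2 ⊆ dyadic n Q.1 Q.2},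
      ∃ M, M ∈ Mx ∧ dyadic n a.val.1 a.val.2 ⊆ dyadic n M.1 M.2 := by
    intro a
    obtain ⟨M, h1, h2, h3, h4⟩ := exists_maximal hn I Q a.2.1 a.2.2
    exact ⟨M, ⟨h1, h2, h4⟩, h3⟩
  choose g hg1 hg2 using hch
  have hMQ : ∑' M : Mx, dvol M.val ≤ volume (dyadic n Q.1 Q.2) := by
    refine le_trans (tsum_meas_le_meas_iUnion_of_disjoint volume
      (As := fun M : Mx => dyadic n M.val.1 M.val.2) (fun M => dyadic_measurable) ?_)
      (measure_mono (iUnion_subset fun M => M.2.2.1))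
    intro M M' hne
    rw [Function.onFun]
    by_contra hnd
    obtain ⟨x, hx1, hx2⟩ := Set.not_disjoint_iff.1 hnd
    rcases dyadic_nested_or_disjoint M.val M'.val ⟨x, hx1, hx2⟩ with h | h
    · exact hne (Subtype.ext (M.2.2.2 M'.val M'.2.1 h M'.2.2.1).symm)
    · exact hne (Subtype.ext (M'.2.2.2 M.val M.2.1 h M.2.2.1))
  let ι : {R : ℤ × (Fin n → ℤ) // R ∈ I ∧ dyadic n R.1 R.2 ⊆ dyadic n Q.1 Q.2} →
      (Σ M : Mx, {T : ℤ × (Fin n → ℤ) // T ∈ I ∧ dyadic n T.1 T.2 ⊆ dyadic n M.val.1 M.val.2}) :=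
    fun a => ⟨⟨g a, hg1 a⟩, ⟨a.val, a.2.1, hg2 a⟩⟩
  have hinj : Function.Injective ι := by
    intro a a' h
    exact Subtype.ext (congrArg (fun p :
      (Σ M : Mx, {T : ℤ × (Fin n → ℤ) // T ∈ I ∧ dyadic n T.1 T.2 ⊆ dyadic n M.val.1 M.val.2}) =>
        p.2.val) h)
  calc ∑' R : {R : ℤ × (Fin n → ℤ) // R ∈ I ∧ dyadic n R.1 R.2 ⊆ dyadic n Q.1 Q.2},
        volume (dyadic n R.val.1 R.val.2)
      = ∑' a : {R : ℤ × (Fin n → ℤ) // R ∈ I ∧ dyadic n R.1 R.2 ⊆ dyadic n Q.1 Q.2},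
        dvol ((ι a).2.val) := rfl
    _ ≤ ∑' p : (Σ M : Mx,
          {T : ℤ × (Fin n → ℤ) // T ∈ I ∧ dyadic n T.1 T.2 ⊆ dyadic n M.val.1 M.val.2}),
        dvol p.2.val := ENNReal.tsum_comp_le_tsum_of_injective hinj _
    _ = ∑' M : Mx, ∑' T : {T : ℤ × (Fin n → ℤ) // T ∈ I ∧
          dyadic n T.1 T.2 ⊆ dyadic n M.val.1 M.val.2}, dvol T.val :=
        ENNReal.tsum_sigma' _
    _ ≤ ∑' M : Mx, CI * dvol M.val := ENNReal.tsum_le_tsum fun M => hI M.val M.2.1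
    _ = CI * ∑' M : Mx, dvol M.val := ENNReal.tsum_mul_left
    _ ≤ CI * volume (dyadic n Q.1 Q.2) := mul_le_mul_right hMQ CI

lemma bsum_succ_le (hn : n ≠ 0) {τ : ℝ}
    (hsparse : ∀ Q : ℤ × (Fin n → ℤ),
      ∑' Q' : maxStop n crit Q, volume (dyadic n Q'.val.1 Q'.val.2)
        ≤ ENNReal.ofReal τ * volume (dyadic n Q.1 Q.2))
    {Q : ℤ × (Fin n → ℤ)} {kQ : ℕ} (hQ : Q ∈ stopAcc n crit I kQ) (j : ℕ) :
    ∑' S : {S : ℤ × (Fin n → ℤ) // S ∈ newAt n crit I (j+1) ∧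
        dyadic n S.1 S.2 ⊂ dyadic n Q.1 Q.2}, dvol S.val
      ≤ ENNReal.ofReal τ *
        ∑' F : {F : ℤ × (Fin n → ℤ) // F ∈ newAt n crit I j ∧
          dyadic n F.1 F.2 ⊆ dyadic n Q.1 Q.2}, dvol F.val := by
  classical
  have hch : ∀ a : {S : ℤ × (Fin n → ℤ) // S ∈ newAt n crit I (j+1) ∧
      dyadic n S.1 S.2 ⊂ dyadic n Q.1 Q.2},
      ∃ F, (F ∈ newAt n crit I j ∧ dyadic n F.1 F.2 ⊆ dyadic n Q.1 Q.2) ∧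
        a.val ∈ maxStop n crit F := by
    intro a
    obtain ⟨F, h1, h2, h3⟩ := parent_in_cube hn a.2.1 hQ a.2.2
    exact ⟨F, ⟨h1, h3⟩, h2⟩
  choose g hg1 hg2 using hch
  let ι : {S : ℤ × (Fin n → ℤ) // S ∈ newAt n crit I (j+1) ∧
        dyadic n S.1 S.2 ⊂ dyadic n Q.1 Q.2} →
      (Σ F : {F : ℤ × (Fin n → ℤ) // F ∈ newAt n crit I j ∧
        dyadic n F.1 F.2 ⊆ dyadic n Q.1 Q.2}, maxStop n crit F.val) :=
    fun a => ⟨⟨g a, hg1 a⟩, ⟨a.val, hg2 a⟩⟩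
  have hinj : Function.Injective ι := by
    intro a a' h
    exact Subtype.ext (congrArg (fun p :
      (Σ F : {F : ℤ × (Fin n → ℤ) // F ∈ newAt n crit I j ∧
        dyadic n F.1 F.2 ⊆ dyadic n Q.1 Q.2}, maxStop n crit F.val) => p.2.val) h)
  calc ∑' S : {S : ℤ × (Fin n → ℤ) // S ∈ newAt n crit I (j+1) ∧
        dyadic n S.1 S.2 ⊂ dyadic n Q.1 Q.2}, dvol S.val
      = ∑' a : {S : ℤ × (Fin n → ℤ) // S ∈ newAt n crit I (j+1) ∧
        dyadic n S.1 S.2 ⊂ dyadic n Q.1 Q.2}, dvol ((ι a).2.val) := rfl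
    _ ≤ ∑' p : (Σ F : {F : ℤ × (Fin n → ℤ) // F ∈ newAt n crit I j ∧
          dyadic n F.1 F.2 ⊆ dyadic n Q.1 Q.2}, maxStop n crit F.val),
        dvol p.2.val := ENNReal.tsum_comp_le_tsum_of_injective hinj _
    _ = ∑' F : {F : ℤ × (Fin n → ℤ) // F ∈ newAt n crit I j ∧
          dyadic n F.1 F.2 ⊆ dyadic n Q.1 Q.2}, ∑' S' : maxStop n crit F.val, dvol S'.val :=
        ENNReal.tsum_sigma' _
    _ ≤ ∑' F : {F : ℤ × (Fin n → ℤ) // F ∈ newAt n crit I j ∧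
          dyadic n F.1 F.2 ⊆ dyadic n Q.1 Q.2}, ENNReal.ofReal τ * dvol F.val :=
        ENNReal.tsum_le_tsum fun F => hsparse F.val
    _ = ENNReal.ofReal τ * ∑' F : {F : ℤ × (Fin n → ℤ) // F ∈ newAt n crit I j ∧
          dyadic n F.1 F.2 ⊆ dyadic n Q.1 Q.2}, dvol F.val := ENNReal.tsum_mul_left

open scoped Classical in
lemma Bsum_le_bsum_add (hn : n ≠ 0) (Q : ℤ × (Fin n → ℤ)) (j : ℕ) :
    (∑' S : {S : ℤ × (Fin n → ℤ) // S ∈ newAt n crit I j ∧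
        dyadic n S.1 S.2 ⊆ dyadic n Q.1 Q.2}, dvol S.val)
      ≤ (∑' S : {S : ℤ × (Fin n → ℤ) // S ∈ newAt n crit I j ∧
          dyadic n S.1 S.2 ⊂ dyadic n Q.1 Q.2}, dvol S.val)
        + (if Q ∈ newAt n crit I j then volume (dyadic n Q.1 Q.2) else 0) := by
  classical
  let A : Set (ℤ × (Fin n → ℤ)) :=
    {S | S ∈ newAt n crit I j ∧ dyadic n S.1 S.2 ⊆ dyadic n Q.1 Q.2}
  let B : Set (ℤ × (Fin n → ℤ)) :=
    {S | S ∈ newAt n crit I j ∧ dyadic n S.1 S.2 ⊂ dyadic n Q.1 Q.2}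
  have e1 : (∑' S : {S : ℤ × (Fin n → ℤ) // S ∈ newAt n crit I j ∧
      dyadic n S.1 S.2 ⊆ dyadic n Q.1 Q.2}, dvol S.val) = ∑' S, A.indicator dvol S :=
    tsum_subtype A dvol
  have e2 : (∑' S : {S : ℤ × (Fin n → ℤ) // S ∈ newAt n crit I j ∧
      dyadic n S.1 S.2 ⊂ dyadic n Q.1 Q.2}, dvol S.val) = ∑' S, B.indicator dvol S :=
    tsum_subtype B dvol
  rw [e1, e2]
  by_cases hQj : Q ∈ newAt n crit I j
  · rw [if_pos hQj]
    have hpt : ∀ S, A.indicator dvol S ≤ B.indicator dvol S + ({Q} : Set _).indicator dvol S := by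
      intro S
      by_cases hS : S ∈ A
      · rw [indicator_of_mem hS]
        by_cases hS' : S ∈ B
        · rw [indicator_of_mem hS']; exact le_self_add
        · have hSQ : S = Q := by
            by_contra hne
            exact hS' ⟨hS.1, dyadic_ssubset_of_ne hn hS.2 hne⟩
          subst hSQ
          rw [indicator_of_mem (mem_singleton S)]
          exact le_add_self
      · rw [indicator_of_notMem hS]; exact zero_le
    calc (∑' S, A.indicator dvol S)
        ≤ ∑' S, (B.indicator dvol S + ({Q} : Set _).indicator dvol S) :=
          ENNReal.tsum_le_tsum hpt
      _ = (∑' S, B.indicator dvol S) + ∑' S, ({Q} : Set _).indicator dvol S :=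
          ENNReal.tsum_add
      _ = (∑' S, B.indicator dvol S) + volume (dyadic n Q.1 Q.2) := by
          rw [← tsum_subtype ({Q} : Set _) dvol, tsum_singleton Q dvol]; rfl
  · rw [if_neg hQj, add_zero]
    refine ENNReal.tsum_le_tsum fun S => ?_
    by_cases hS : S ∈ A
    · have hSB : S ∈ B := by
        refine ⟨hS.1, ?_⟩
        have hne : S ≠ Q := fun h => hQj (h ▸ hS.1)
        exact dyadic_ssubset_of_ne hn hS.2 hne
      rw [indicator_of_mem hS, indicator_of_mem hSB]
    · rw [indicator_of_notMem hS]; exact zero_le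

lemma total_eq (Q : ℤ × (Fin n → ℤ)) :
    (∑' R : {R : ℤ × (Fin n → ℤ) // R ∈ stopFam n crit I ∧
        dyadic n R.1 R.2 ⊆ dyadic n Q.1 Q.2}, dvol R.val)
      = ∑' j : ℕ, ∑' S : {S : ℤ × (Fin n → ℤ) // S ∈ newAt n crit I j ∧
          dyadic n S.1 S.2 ⊆ dyadic n Q.1 Q.2}, dvol S.val := by
  classical
  let T : Set (ℤ × (Fin n → ℤ)) :=
    {R | R ∈ stopFam n crit I ∧ dyadic n R.1 R.2 ⊆ dyadic n Q.1 Q.2}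
  have e0 : (∑' R : {R : ℤ × (Fin n → ℤ) // R ∈ stopFam n crit I ∧
      dyadic n R.1 R.2 ⊆ dyadic n Q.1 Q.2}, dvol R.val) = ∑' S, T.indicator dvol S :=
    tsum_subtype T dvol
  have ej : ∀ j : ℕ, (∑' S : {S : ℤ × (Fin n → ℤ) // S ∈ newAt n crit I j ∧
      dyadic n S.1 S.2 ⊆ dyadic n Q.1 Q.2}, dvol S.val)
      = ∑' S, ({S | S ∈ newAt n crit I j ∧ dyadic n S.1 S.2 ⊆ dyadic n Q.1 Q.2}).indicator
          dvol S := fun j => tsum_subtype _ dvol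
  rw [e0]
  have hpt : ∀ S, T.indicator dvol S = ∑' j : ℕ,
      ({S | S ∈ newAt n crit I j ∧ dyadic n S.1 S.2 ⊆ dyadic n Q.1 Q.2}).indicator dvol S := by
    intro S
    by_cases hS : S ∈ T
    · obtain ⟨j0, hj0⟩ := mem_stopFam_iff_newAt.1 hS.1
      rw [indicator_of_mem hS]
      symm
      rw [tsum_eq_single j0]
      · refine indicator_of_mem ?_ dvol
        exact ⟨hj0, hS.2⟩
      · intro j hj
        refine indicator_of_notMem (fun hmem => hj ?_) dvol
        exact newAt_stage_unique hmem.1 hj0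
    · rw [indicator_of_notMem hS]
      symm
      refine ENNReal.tsum_eq_zero.2 fun j => indicator_of_notMem (fun hmem => ?_) dvol
      exact hS ⟨newAt_subset_fam j hmem.1, hmem.2⟩
  rw [tsum_congr hpt, ENNReal.tsum_comm]
  exact tsum_congr fun j => (ej j).symm


lemma shifted_sum (t V : ℝ≥0∞) (j0 : ℕ) :
    (∑' j : ℕ, if j0 ≤ j then t ^ (j - j0) * V else 0) = (1 - t)⁻¹ * V := by
  classical
  have key : (∑' j : ℕ, if j0 ≤ j then t ^ (j - j0) * V else 0) = ∑' i : ℕ, t ^ i * V := by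
    apply tsum_eq_tsum_of_ne_zero_bij (fun x => x.val + j0)
    · intro x y h
      have h' : (x : ℕ) + j0 = (y : ℕ) + j0 := h
      exact Subtype.ext (by omega : (x : ℕ) = (y : ℕ))
    · intro j hj
      rw [Function.mem_support] at hj
      have h1 : j0 ≤ j := by
        by_contra h
        rw [if_neg h] at hj
        exact hj rfl
      rw [if_pos h1] at hj
      refine ⟨⟨j - j0, hj⟩, ?_⟩
      show (j - j0) + j0 = j
      omega
    · intro x
      show (if j0 ≤ x.val + j0 then t ^ (x.val + j0 - j0) * V else 0) = t ^ x.val * V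
      rw [if_pos (by omega : j0 ≤ x.val + j0), Nat.add_sub_cancel]
  rw [key, ENNReal.tsum_mul_right, ENNReal.tsum_geometric]

/-- if the stopping criterion is sparse (with constant `τ < 1`) and the initial
collection `I` is Carleson, then the stopping family `F(I, crit)` is Carleson. -/
theorem stmt10 (n : ℕ) (τ : ℝ) (hτ0 : 0 ≤ τ) (hτ1 : τ < 1)
    (CI : ℝ≥0∞) (hCI : CI ≠ ⊤)
    (crit : ℤ × (Fin n → ℤ) → ℤ × (Fin n → ℤ) → Prop)
    (I : Set (ℤ × (Fin n → ℤ)))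
    (hsparse : ∀ Q : ℤ × (Fin n → ℤ),
      ∑' Q' : maxStop n crit Q, volume (dyadic n Q'.val.1 Q'.val.2)
        ≤ ENNReal.ofReal τ * volume (dyadic n Q.1 Q.2))
    (hI : ∀ Q ∈ I,
      ∑' R : {R : ℤ × (Fin n → ℤ) // R ∈ I ∧ dyadic n R.1 R.2 ⊆ dyadic n Q.1 Q.2},
        volume (dyadic n R.val.1 R.val.2) ≤ CI * volume (dyadic n Q.1 Q.2)) :
    ∃ C : ℝ≥0∞, C ≠ ⊤ ∧
      ∀ Q ∈ stopFam n crit I,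
        ∑' R : {R : ℤ × (Fin n → ℤ) //
            R ∈ stopFam n crit I ∧ dyadic n R.1 R.2 ⊆ dyadic n Q.1 Q.2},
          volume (dyadic n R.val.1 R.val.2) ≤ C * volume (dyadic n Q.1 Q.2) := by
  classical
  set t := ENNReal.ofReal τ with ht
  have ht1 : t < 1 := by rw [ht]; exact ENNReal.ofReal_lt_one.2 hτ1
  have htne : (1 : ℝ≥0∞) - t ≠ 0 := (tsub_pos_of_lt ht1).ne'
  refine ⟨CI + (1 - t)⁻¹ * (CI + 1), ?_, ?_⟩
  · exact ENNReal.add_ne_top.2 ⟨hCI, ENNReal.mul_ne_top (ENNReal.inv_ne_top.2 htne)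
      (ENNReal.add_ne_top.2 ⟨hCI, ENNReal.one_ne_top⟩)⟩
  intro Q hQ
  by_cases hn : n = 0
  · -- degenerate case: all cubes are `univ`, so the stopping family is just `I`
    subst hn
    have hdy : ∀ (k : ℤ) (m : Fin 0 → ℤ), dyadic 0 k m = univ := fun k m =>
      eq_univ_of_forall fun x i => isEmptyElim i
    have hms : ∀ P S, S ∉ maxStop 0 crit P := by
      intro P S hS
      have h := hS.1
      rw [hdy, hdy] at h
      exact ssubset_irrefl _ h
    have hacc : ∀ k, stopAcc 0 crit I k = I := by
      intro k
      induction k with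
      | zero => rfl
      | succ k ih =>
        show stopAcc 0 crit I k ∪ _ = I
        have hempty : {F' | ∃ F ∈ stopAcc 0 crit I k, F' ∈ maxStop 0 crit F ∧
            ∀ F'' ∈ stopAcc 0 crit I k, dyadic 0 F''.1 F''.2 ⊂ dyadic 0 F.1 F.2 →
              ¬ dyadic 0 F'.1 F'.2 ⊆ dyadic 0 F''.1 F''.2} = ∅ := by
          refine eq_empty_iff_forall_notMem.2 fun S hS => ?_
          obtain ⟨F, _, hSF, _⟩ := hS
          exact hms F S hSF
        rw [hempty, union_empty, ih]
    have hfam : stopFam 0 crit I = I := by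
      rw [stopFam]
      simp only [hacc, iUnion_const]
    rw [hfam] at hQ
    show (∑' R : {R : ℤ × (Fin 0 → ℤ) //
        R ∈ stopFam 0 crit I ∧ dyadic 0 R.1 R.2 ⊆ dyadic 0 Q.1 Q.2}, dvol R.val)
      ≤ (CI + (1 - t)⁻¹ * (CI + 1)) * volume (dyadic 0 Q.1 Q.2)
    have e1 : (∑' R : {R : ℤ × (Fin 0 → ℤ) //
        R ∈ stopFam 0 crit I ∧ dyadic 0 R.1 R.2 ⊆ dyadic 0 Q.1 Q.2},
        dvol R.val)
        = ∑' R : ℤ × (Fin 0 → ℤ),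
          Set.indicator {R : ℤ × (Fin 0 → ℤ) |
            R ∈ stopFam 0 crit I ∧ dyadic 0 R.1 R.2 ⊆ dyadic 0 Q.1 Q.2} dvol R :=
      tsum_subtype _ _
    have e2 : (∑' R : {R : ℤ × (Fin 0 → ℤ) //
        R ∈ I ∧ dyadic 0 R.1 R.2 ⊆ dyadic 0 Q.1 Q.2},
        dvol R.val)
        = ∑' R : ℤ × (Fin 0 → ℤ),
          Set.indicator {R : ℤ × (Fin 0 → ℤ) |
            R ∈ I ∧ dyadic 0 R.1 R.2 ⊆ dyadic 0 Q.1 Q.2} dvol R :=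
      tsum_subtype _ _
    have hsets : {R : ℤ × (Fin 0 → ℤ) |
        R ∈ stopFam 0 crit I ∧ dyadic 0 R.1 R.2 ⊆ dyadic 0 Q.1 Q.2}
        = {R : ℤ × (Fin 0 → ℤ) | R ∈ I ∧ dyadic 0 R.1 R.2 ⊆ dyadic 0 Q.1 Q.2} := by
      ext R
      rw [mem_setOf_eq, mem_setOf_eq, hfam]
    rw [e1, hsets, ← e2]
    exact le_trans (hI Q hQ) (mul_le_mul_left le_self_add _)
  · -- main case `n ≥ 1`
    obtain ⟨kQ, hQk⟩ := mem_iUnion.1 hQ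
    obtain ⟨j0, hj0⟩ := mem_stopFam_iff_newAt.1 hQ
    set V := volume (dyadic n Q.1 Q.2) with hV
    set Bf : ℕ → ℝ≥0∞ := fun j =>
      ∑' S : {S : ℤ × (Fin n → ℤ) // S ∈ newAt n crit I j ∧
        dyadic n S.1 S.2 ⊆ dyadic n Q.1 Q.2}, dvol S.val with hBf
    have hB0 : Bf 0 ≤ CI * V := Isum_le hn hI Q
    have hrec : ∀ j, Bf (j+1) ≤ t * Bf j + (if Q ∈ newAt n crit I (j+1) then V else 0) :=
      fun j => le_trans (Bsum_le_bsum_add hn Q (j+1))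
        (add_le_add_left (bsum_succ_le hn hsparse hQk j) _)
    have hbound : ∀ j, Bf j ≤ t ^ j * (CI * V) + (if j0 ≤ j then t ^ (j - j0) * V else 0) := by
      intro j
      induction j with
      | zero =>
        rcases le_or_gt j0 0 with h0 | h0
        · rw [if_pos h0, pow_zero, one_mul]
          exact hB0.trans le_self_add
        · rw [if_neg (by omega), pow_zero, one_mul, add_zero]
          exact hB0
      | succ j ih =>
        have hmul : t * Bf j ≤ t ^ (j+1) * (CI * V)
            + t * (if j0 ≤ j then t ^ (j - j0) * V else 0) := by
          calc t * Bf j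
              ≤ t * (t ^ j * (CI * V) + (if j0 ≤ j then t ^ (j - j0) * V else 0)) :=
                mul_le_mul_right ih t
            _ = t ^ (j+1) * (CI * V) + t * (if j0 ≤ j then t ^ (j - j0) * V else 0) := by
                rw [mul_add, pow_succ]; ring
        refine (hrec j).trans ((add_le_add_left hmul _).trans ?_)
        rw [add_assoc]
        refine add_le_add_right ?_ _
        by_cases hle : j0 ≤ j
        · have hne : Q ∉ newAt n crit I (j+1) := fun h => by
            have := newAt_stage_unique h hj0
            omega
          rw [if_neg hne, add_zero, if_pos hle, if_pos (by omega : j0 ≤ j + 1)]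
          rw [show j + 1 - j0 = (j - j0) + 1 from by omega, pow_succ]
          apply le_of_eq
          ring
        · rw [if_neg hle, mul_zero, zero_add]
          by_cases heq : j0 = j + 1
          · rw [if_pos (by omega : j0 ≤ j + 1),
              show j + 1 - j0 = 0 from by omega, pow_zero, one_mul]
            split_ifs
            · exact le_rfl
            · exact zero_le
          · have hne : Q ∉ newAt n crit I (j+1) := fun h => heq (newAt_stage_unique hj0 h)
            rw [if_neg hne, if_neg (by omega : ¬ j0 ≤ j + 1)]
    calc (∑' R : {R : ℤ × (Fin n → ℤ) //
            R ∈ stopFam n crit I ∧ dyadic n R.1 R.2 ⊆ dyadic n Q.1 Q.2},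
          volume (dyadic n R.val.1 R.val.2))
        = ∑' j : ℕ, Bf j := total_eq Q
      _ ≤ ∑' j : ℕ, (t ^ j * (CI * V) + (if j0 ≤ j then t ^ (j - j0) * V else 0)) :=
          ENNReal.tsum_le_tsum hbound
      _ = (∑' j : ℕ, t ^ j * (CI * V))
            + ∑' j : ℕ, (if j0 ≤ j then t ^ (j - j0) * V else 0) := ENNReal.tsum_add
      _ = (1 - t)⁻¹ * (CI * V) + (1 - t)⁻¹ * V := by
          rw [ENNReal.tsum_mul_right, ENNReal.tsum_geometric, shifted_sum]
      _ ≤ (CI + (1 - t)⁻¹ * (CI + 1)) * V := by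
          have he : (1 - t)⁻¹ * (CI * V) + (1 - t)⁻¹ * V = ((1 - t)⁻¹ * (CI + 1)) * V := by
            ring
          rw [he]
          exact mul_le_mul_left le_add_self _
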